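/- Let P be a directed set such that P = ⋃_{n<ω} P_n where each P_n has relative calibre ω in P (every countable subset of P_n is bounded in P). Then P is powerfully calibre (ω₁,ω): the countable power P^ω, with the coordinatewise order, has calibre (ω₁,ω). -/
import Mathlib


open Cardinal Set

/-- A directed set has calibre `(ω₁,ω)` if every uncountable subset contains an
infinite subset which is bounded (has an upper bound). -/
def CalibreO1O (P : Type*) [Preorder P] : Prop :=
  ∀ S : Set P, ¬ S.Countable → ∃ T ⊆ S, T.Infinite ∧ BddAbove T

/-- From an uncountable set one can extract an injective sequence on which a given
`ℕ`-valued "coordinate" function is pointwise bounded. -/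
lemma aux_extract {α : Type*} (g : α → ℕ → ℕ) (S : Set α) (hS : ¬ S.Countable) :
    ∃ f : ℕ → α, Function.Injective f ∧ (∀ n, f n ∈ S) ∧
      ∀ m, ∃ K, ∀ n, g (f n) m ≤ K := by
  classical
  have step : ∀ (A : Set α), ¬ A.Countable → ∀ m : ℕ,
      ∃ a : ℕ, ¬ (A ∩ {x | g x m = a}).Countable := by
    intro A hA m
    by_contra hc
    push_neg at hc
    apply hA
    have hsub : A ⊆ ⋃ a : ℕ, A ∩ {x | g x m = a} := fun x hx =>
      Set.mem_iUnion.mpr ⟨g x m, hx, rfl⟩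
    exact (Set.countable_iUnion hc).mono hsub
  let Bfun : Set α → ℕ → Set α := fun A m =>
    if hA : ¬ A.Countable then A ∩ {x | g x m = (step A hA m).choose} else A
  have hB : ∀ (A : Set α) (hA : ¬ A.Countable) (m : ℕ),
      Bfun A m ⊆ A ∧ ¬ (Bfun A m).Countable ∧
      ∀ x ∈ Bfun A m, ∀ y ∈ Bfun A m, g x m = g y m := by
    intro A hA m
    simp only [Bfun, dif_pos hA]
    refine ⟨Set.inter_subset_left, (step A hA m).choose_spec, ?_⟩
    rintro x ⟨-, hx⟩ y ⟨-, hy⟩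
    exact hx.trans hy.symm
  let F : ℕ → Set α := fun n => Nat.rec S (fun m prev => Bfun prev m) n
  have hFs : ∀ n, F (n + 1) = Bfun (F n) n := fun n => rfl
  have hFc : ∀ n, ¬ (F n).Countable := by
    intro n; induction n with
    | zero => exact hS
    | succ n ih => rw [hFs n]; exact (hB (F n) ih n).2.1
  have hFsub : ∀ n, F (n + 1) ⊆ F n := fun n => by
    rw [hFs n]; exact (hB (F n) (hFc n) n).1
  have hFmono : ∀ m n, m ≤ n → F n ⊆ F m := by
    intro m n h
    induction h with
    | refl => exact subset_rfl
    | step h ih => exact (hFsub _).trans ih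
  have hFS : ∀ n, F n ⊆ S := fun n => hFmono 0 n (Nat.zero_le n)
  have hconst : ∀ m, ∀ x ∈ F (m + 1), ∀ y ∈ F (m + 1), g x m = g y m := by
    intro m; rw [hFs m]; exact (hB (F m) (hFc m) m).2.2
  have hFinf : ∀ n, (F n).Infinite := fun n hfin => hFc n hfin.countable
  have hpick : ∀ (n : ℕ) (u : Finset α), ∃ x, x ∈ F (n + 1) ∧ x ∉ u := by
    intro n u
    obtain ⟨x, hx, hxu⟩ := (hFinf (n + 1)).exists_notMem_finset u
    exact ⟨x, hx, hxu⟩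
  let u : ℕ → Finset α := fun n =>
    Nat.rec ∅ (fun m um => insert (hpick m um).choose um) n
  let f : ℕ → α := fun n => (hpick n (u n)).choose
  have hu : ∀ n, u (n + 1) = insert (f n) (u n) := fun n => rfl
  have hf1 : ∀ n, f n ∈ F (n + 1) := fun n => (hpick n (u n)).choose_spec.1
  have hf2 : ∀ n, f n ∉ u n := fun n => (hpick n (u n)).choose_spec.2
  have humono : ∀ m n, m ≤ n → u m ⊆ u n := by
    intro m n h
    induction h with
    | refl => exact subset_rfl
    | step h ih =>
      refine ih.trans ?_
      rw [hu]
      exact Finset.subset_insert _ _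
  have hmem : ∀ m n, m < n → f m ∈ u n := by
    intro m n h
    have h1 : f m ∈ u (m + 1) := by rw [hu]; exact Finset.mem_insert_self _ _
    exact humono _ _ h h1
  have hinj : Function.Injective f := by
    intro a b hab
    rcases lt_trichotomy a b with h | h | h
    · exact absurd (hab ▸ hmem a b h) (hf2 b)
    · exact h
    · exact absurd (hab ▸ hmem b a h) (hf2 a)
  refine ⟨f, hinj, fun n => hFS (n + 1) (hf1 n), ?_⟩
  intro m
  refine ⟨Finset.sup (Finset.range (m + 1)) (fun i => g (f i) m), fun n => ?_⟩
  rcases le_or_gt n m with h | h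
  · exact Finset.le_sup (f := fun i => g (f i) m) (Finset.mem_range.mpr (Nat.lt_succ_of_le h))
  · have h1 : f n ∈ F (m + 1) := hFmono (m + 1) (n + 1) (Nat.succ_le_succ h.le) (hf1 n)
    have h2 : g (f n) m = g (f m) m := hconst m _ h1 _ (hf1 m)
    rw [h2]
    exact Finset.le_sup (f := fun i => g (f i) m) (Finset.mem_range.mpr (Nat.lt_succ_self m))

/-- if `P = ⋃_n P_n` where every countable subset of each `P_n`
is bounded in `P`, then `P` is powerfully calibre `(ω₁,ω)`: the countable power
`P^ω` has calibre `(ω₁,ω)`. -/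
theorem sigma_relative_calibre_omega_powerful {P : Type u} [PartialOrder P]
    (hPdir : ∀ F : Set P, F.Finite → BddAbove F)
    (Pn : ℕ → Set P) (hcover : (⋃ k, Pn k) = Set.univ)
    (hrel : ∀ k, ∀ S ⊆ Pn k, S.Countable → BddAbove S) :
    CalibreO1O (ℕ → P) := by
  classical
  have hx : ∀ x : P, ∃ k, x ∈ Pn k := by
    intro x
    have : x ∈ ⋃ k, Pn k := by rw [hcover]; trivial
    exact Set.mem_iUnion.mp this
  set h : P → ℕ := fun x => (hx x).choose with hhdef
  have hh : ∀ x, x ∈ Pn (h x) := fun x => (hx x).choose_spec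
  intro S hS
  obtain ⟨f, hinj, hmemS, hbd⟩ := aux_extract (fun y m => h (y m)) S hS
  refine ⟨Set.range f, Set.range_subset_iff.mpr hmemS,
    Set.infinite_range_of_injective hinj, ?_⟩
  have hcm : ∀ m : ℕ, ∃ c : P, ∀ n, f n m ≤ c := by
    intro m
    obtain ⟨K, hK⟩ := hbd m
    have hbk : ∀ k : ℕ, ∃ b : P, ∀ x ∈ Pn k ∩ Set.range (fun n => f n m), x ≤ b := by
      intro k
      have hc : (Pn k ∩ Set.range (fun n => f n m)).Countable :=
        (Set.countable_range _).mono Set.inter_subset_right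
      obtain ⟨b, hb⟩ := hrel k _ Set.inter_subset_left hc
      exact ⟨b, fun x hxm => hb hxm⟩
    choose b hb using hbk
    obtain ⟨c, hc⟩ := hPdir (b '' {k | k ≤ K}) ((Set.finite_Iic K).image b)
    refine ⟨c, fun n => ?_⟩
    have h1 : f n m ∈ Pn (h (f n m)) := hh _
    have h2 : f n m ≤ b (h (f n m)) := hb _ _ ⟨h1, ⟨n, rfl⟩⟩
    exact h2.trans (hc ⟨h (f n m), hK n, rfl⟩)
  choose c hc using hcm
  refine ⟨c, ?_⟩
  rintro y ⟨n, rfl⟩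
  exact fun m => hc m n
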